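/- For the quaternionic polynomial f(x) = x², the image f(B) of the open unit ball B = {x ∈ ℍ : ‖x - i‖ < 1} centered at i does not contain any point of ℂ_k \ ℝ = {α + βk : β ≠ 0}; consequently f(i) = -1 is not an interior point of f(B), so x ↦ x² is not an open map on ℍ. -/

import Mathlib

open Quaternion

/-- The quaternion unit `i`. -/
def qi : ℍ[ℝ] := ⟨0, 1, 0, 0⟩

/-- The quaternion unit `k`. -/
def qk : ℍ[ℝ] := ⟨0, 0, 0, 1⟩

lemma qi_re : qi.re = 0 := rfl
lemma qi_imI : qi.imI = 1 := rfl
lemma qi_imJ : qi.imJ = 0 := rfl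
lemma qi_imK : qi.imK = 0 := rfl
lemma qk_re : qk.re = 0 := rfl
lemma qk_imI : qk.imI = 0 := rfl
lemma qk_imJ : qk.imJ = 0 := rfl
lemma qk_imK : qk.imK = 1 := rfl

/-- The image of the unit ball centered at `i` under `x ↦ x²` misses `ℂ_k \ ℝ`; hence
`i² = -1` is not interior to that image and `x ↦ x²` is not an open map on `ℍ`. -/
theorem sq_not_open_map :
    (∀ α β : ℝ, β ≠ 0 →
        (α : ℍ[ℝ]) + β • qk ∉ (fun x : ℍ[ℝ] => x ^ 2) '' Metric.ball qi 1) ∧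
    qi ^ 2 ∉ interior ((fun x : ℍ[ℝ] => x ^ 2) '' Metric.ball qi 1) ∧
    ¬ IsOpenMap (fun x : ℍ[ℝ] => x ^ 2) := by
  have key : ∀ α β : ℝ, β ≠ 0 →
      (α : ℍ[ℝ]) + β • qk ∉ (fun x : ℍ[ℝ] => x ^ 2) '' Metric.ball qi 1 := by
    rintro α β hβ ⟨x, hx, hfx⟩
    simp only [pow_two] at hfx
    have hI : (x * x).imI = ((α : ℍ[ℝ]) + β • qk).imI := by rw [hfx]
    have hJ : (x * x).imJ = ((α : ℍ[ℝ]) + β • qk).imJ := by rw [hfx]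
    have hK : (x * x).imK = ((α : ℍ[ℝ]) + β • qk).imK := by rw [hfx]
    simp only [Quaternion.imI_mul, Quaternion.imJ_mul, Quaternion.imK_mul, qk_re, qk_imI, qk_imJ, qk_imK,
      Quaternion.imI_add, Quaternion.imJ_add, Quaternion.imK_add,
      Quaternion.imI_coe, Quaternion.imJ_coe, Quaternion.imK_coe,
      Quaternion.imI_smul, Quaternion.imJ_smul, Quaternion.imK_smul,
      smul_eq_mul, mul_zero, mul_one, zero_add, add_zero] at hI hJ hK
    -- hI : x.re * x.imI + x.imI * x.re + x.imJ * x.imK - x.imK * x.imJ = 0 etc.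
    have ha : x.re ≠ 0 := by
      intro h; apply hβ; rw [← hK]; ring_nf; rw [h]; ring
    have hb : x.imI = 0 := by
      have : 2 * x.re * x.imI = 0 := by linear_combination hI
      rcases mul_eq_zero.1 this with h | h
      · exfalso; apply ha
        rcases mul_eq_zero.1 h with h' | h'
        · norm_num at h'
        · exact h'
      · exact h
    have hd : x.imK ≠ 0 := by
      intro h; apply hβ; rw [← hK, h]; ring
    have hball : ‖x - qi‖ < 1 := by
      rw [Metric.mem_ball, dist_eq_norm] at hx; exact hx
    have hns : Quaternion.normSq (x - qi) < 1 := by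
      have := Quaternion.normSq_eq_norm_mul_self (x - qi)
      rw [this]
      nlinarith [norm_nonneg (x - qi)]
    have hexp : Quaternion.normSq (x - qi) =
        x.re ^ 2 + (x.imI - 1) ^ 2 + x.imJ ^ 2 + x.imK ^ 2 := by
      simp only [Quaternion.normSq_def', qi_re, qi_imI, qi_imJ, qi_imK, Quaternion.re_sub, Quaternion.imI_sub,
        Quaternion.imJ_sub, Quaternion.imK_sub]
      ring
    rw [hexp, hb] at hns
    have h1 : 0 < x.re ^ 2 := by positivity
    have h2 : 0 < x.imK ^ 2 := by positivity
    nlinarith [sq_nonneg x.imJ]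
  have hsq : qi ^ 2 = ((-1 : ℝ) : ℍ[ℝ]) := by
    ext <;> simp [pow_two, qi_re, qi_imI, qi_imJ, qi_imK, Quaternion.re_mul, Quaternion.imI_mul, Quaternion.imJ_mul,
      Quaternion.imK_mul]
  have hint : qi ^ 2 ∉ interior ((fun x : ℍ[ℝ] => x ^ 2) '' Metric.ball qi 1) := by
    intro h
    rw [mem_interior_iff_mem_nhds, Metric.mem_nhds_iff] at h
    obtain ⟨ε, hε, hsub⟩ := h
    have hmem : qi ^ 2 + (ε / 2) • qk ∈ Metric.ball (qi ^ 2) ε := by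
      rw [Metric.mem_ball, dist_eq_norm, add_sub_cancel_left, norm_smul]
      have : ‖qk‖ = 1 := by
        have h : ‖qk‖ * ‖qk‖ = 1 := by
          rw [← Quaternion.normSq_eq_norm_mul_self]
          simp [Quaternion.normSq_def', qk_re, qk_imI, qk_imJ, qk_imK]
        nlinarith [norm_nonneg qk]
      rw [this, mul_one, Real.norm_eq_abs, abs_of_pos (by linarith)]
      linarith
    have := hsub hmem
    rw [hsq] at this
    exact key (-1) (ε / 2) (by linarith) this
  refine ⟨key, hint, fun hopen => ?_⟩
  apply hint
  have : IsOpen ((fun x : ℍ[ℝ] => x ^ 2) '' Metric.ball qi 1) :=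
    hopen _ Metric.isOpen_ball
  rw [this.interior_eq]
  exact ⟨qi, Metric.mem_ball_self one_pos, rfl⟩
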